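/- Let k ≥ 2 be an integer and let G be a bipartite graph with parts A, B of size 2k+1 and minimum degree at least k. If G has a perfect matching, then there exists a vertex v' ∈ A such that for every v ∈ A with v ≠ v' there exist two perfect matchings M₁ and M₂ of G containing distinct edges incident with v. -/

import Mathlib

/-!
A `(2k+1, k)`-bigraph encoded by `N : Fin (2*k+1) → Finset (Fin (2*k+1))`.
If it has a perfect matching, then there is `v' ∈ A` such that every
`v ∈ A \ {v'}` lies on two distinct edges each contained in a perfect matching.
-/

set_option linter.unusedSectionVars false

section Aux

lemma exists_nodup_chain' {α : Type*} {r : α → α → Prop} {a b : α}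
    (h : Relation.ReflTransGen r a b) :
    ∃ l, List.Chain r a l ∧ (a::l).Nodup ∧ (a::l).getLast (List.cons_ne_nil _ _) = b := by
  induction h using Relation.ReflTransGen.head_induction_on with
  | refl => exact ⟨[], .nil, by simp, rfl⟩
  | @head a c hac hcb ih =>
    obtain ⟨l, hchain, hnd, hlast⟩ := ih
    by_cases hmem : a ∈ c :: l
    · obtain ⟨s, t, hst⟩ := List.append_of_mem hmem
      have hsub : (a :: t) <:+ c :: l := ⟨s, hst.symm⟩
      have hch' : List.Chain' r (a :: t) :=
        List.IsChain.suffix (show List.Chain' r (c::l) from hchain) hsub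
      have hb : (a :: t).getLast? = some b := by
        have h1 : (c::l).getLast? = some b := by
          rw [List.getLast?_eq_getLast_of_ne_nil (List.cons_ne_nil _ _), hlast]
        rwa [hst, List.getLast?_append_of_ne_nil _ (List.cons_ne_nil _ _)] at h1
      refine ⟨t, hch', List.Nodup.sublist hsub.sublist hnd, ?_⟩
      rw [List.getLast?_eq_getLast_of_ne_nil (List.cons_ne_nil _ _)] at hb
      exact Option.some_injective _ hb
    · exact ⟨c :: l, hchain.cons hac, by simp [hnd, hmem],
        by rw [List.getLast_cons_cons]; exact hlast⟩

lemma exists_perm_of_cycle' {α : Type*} [DecidableEq α] {r : α → α → Prop} {b₀ c : α}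
    (h1 : Relation.ReflTransGen r b₀ c) (h2 : r c b₀) (hirr : ∀ x, ¬ r x x) :
    ∃ σ : Equiv.Perm α, σ b₀ ≠ b₀ ∧ ∀ x, σ x = x ∨ r x (σ x) := by
  obtain ⟨l, hch, hnd, hlast⟩ := exists_nodup_chain' h1
  set m : List α := b₀ :: l with hm
  have hmne : m ≠ [] := List.cons_ne_nil _ _
  have hlen : 2 ≤ m.length := by
    rcases l with _ | ⟨d, t⟩
    · exact absurd (hlast ▸ h2) (hirr _)
    · simp [hm]
  have hchain' : List.Chain' r m := hch
  have hnext : ∀ i (h : i < m.length), r (m[i]'h) (m.formPerm (m[i]'h)) := by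
    intro i hi
    have hmod : (i+1) % m.length < m.length := Nat.mod_lt _ (by omega)
    have hfp : m.formPerm (m[i]'hi) = m[(i+1) % m.length]'hmod :=
      List.formPerm_apply_getElem m hnd i hi
    rcases lt_or_ge (i+1) m.length with hlt | hge
    · have hcast : m[(i+1) % m.length]'hmod = m[i+1]'hlt := by
        congr 1
        exact Nat.mod_eq_of_lt hlt
      rw [hfp, hcast]
      have := List.isChain_iff_getElem.mp hchain' i (by omega)
      simpa using this
    · have hcast : m[(i+1) % m.length]'hmod = m[0]'(by omega) := by
        congr 1
        rw [show i+1 = m.length by omega]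
        exact Nat.mod_self _
      rw [hfp, hcast]
      have hgl : m[i]'hi = m.getLast hmne := by
        rw [List.getLast_eq_getElem]
        congr 1
        omega
      have h0 : m[(0:ℕ)]'(by omega) = b₀ := rfl
      rw [hgl, h0, hlast]
      exact h2
  refine ⟨m.formPerm, ?_, ?_⟩
  · have h0 : m[(0:ℕ)]'(by omega) = b₀ := rfl
    have hr := hnext 0 (by omega)
    rw [h0] at hr
    intro hcon
    rw [hcon] at hr
    exact hirr b₀ hr
  · intro x
    by_cases hx : x ∈ m
    · obtain ⟨i, hi, hix⟩ := List.mem_iff_getElem.mp hx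
      right
      have := hnext i hi
      rwa [hix] at this
    · exact Or.inl (List.formPerm_apply_of_notMem hx)

variable {α : Type*} [Fintype α] [DecidableEq α]

noncomputable def outSet (r : α → α → Prop) (b : α) : Finset α :=
  @Finset.filter _ (fun c => r b c) (Classical.decPred _) Finset.univ

noncomputable def reachSet (r : α → α → Prop) (b : α) : Finset α :=
  @Finset.filter _ (fun c => Relation.ReflTransGen r b c) (Classical.decPred _) Finset.univ

lemma mem_outSet {r : α → α → Prop} {b c : α} : c ∈ outSet r b ↔ r b c := by
  simp [outSet]

lemma mem_reachSet {r : α → α → Prop} {b c : α} :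
    c ∈ reachSet r b ↔ Relation.ReflTransGen r b c := by
  simp [reachSet]

lemma noncyc_swap' {r : α → α → Prop} {b : α}
    (h : ¬ ∃ c, Relation.ReflTransGen r b c ∧ r c b) :
    ¬ ∃ c, Relation.ReflTransGen (Function.swap r) b c ∧ Function.swap r c b := by
  rintro ⟨c, hrtg, hcb⟩
  rw [Relation.reflTransGen_swap] at hrtg
  rcases hrtg.cases_tail with heq | ⟨e, hce, heb⟩
  · exact h ⟨b, Relation.ReflTransGen.refl, heq ▸ hcb⟩
  · exact h ⟨e, (Relation.ReflTransGen.single (show r b c from hcb)).trans hce, heb⟩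

lemma reach_card {k : ℕ} (hk : 2 ≤ k) (r : α → α → Prop)
    (hout : ∀ b, k - 1 ≤ (outSet r b).card)
    (hirr : ∀ b, ¬ r b b)
    {b : α} (hnc : ¬ ∃ c, Relation.ReflTransGen r b c ∧ r c b) :
    k + 1 ≤ (reachSet r b).card := by
  have hXb : b ∈ reachSet r b := mem_reachSet.2 Relation.ReflTransGen.refl
  have hns : ∀ c ∈ reachSet r b, ¬ r c b := by
    intro c hc hcb
    exact hnc ⟨c, mem_reachSet.1 hc, hcb⟩
  obtain ⟨c, hc⟩ : (outSet r b).Nonempty := by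
    rw [← Finset.card_pos]
    have := hout b
    omega
  have hbc : r b c := mem_outSet.1 hc
  have hcX : c ∈ reachSet r b := mem_reachSet.2 (Relation.ReflTransGen.single hbc)
  have hcb : c ≠ b := fun h => hirr b (h ▸ hbc)
  have hsub : insert c (outSet r c) ⊆ (reachSet r b).erase b := by
    intro d hd
    rw [Finset.mem_insert] at hd
    rcases hd with rfl | hd
    · exact Finset.mem_erase.2 ⟨hcb, hcX⟩
    · have hcd : r c d := mem_outSet.1 hd
      refine Finset.mem_erase.2 ⟨fun h => hns c hcX (h ▸ hcd), ?_⟩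
      exact mem_reachSet.2
        ((Relation.ReflTransGen.single hbc).trans (Relation.ReflTransGen.single hcd))
  have hcnot : c ∉ outSet r c := fun h => hirr c (mem_outSet.1 h)
  have h1 : k ≤ (insert c (outSet r c)).card := by
    rw [Finset.card_insert_of_notMem hcnot]
    have := hout c
    omega
  have h2 := Finset.card_le_card hsub
  have h3 : ((reachSet r b).erase b).card = (reachSet r b).card - 1 :=
    Finset.card_erase_of_mem hXb
  have h4 : 1 ≤ (reachSet r b).card := Finset.card_pos.2 ⟨b, hXb⟩
  omega

lemma aux_reach {k : ℕ} (hk : 2 ≤ k) (r : α → α → Prop)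
    (hout : ∀ b, k - 1 ≤ (outSet r b).card)
    (hirr : ∀ b, ¬ r b b)
    {b₁ b₂ : α} (h2 : ¬ ∃ c, Relation.ReflTransGen r b₂ c ∧ r c b₂)
    (hne : b₁ ≠ b₂) (hreach : Relation.ReflTransGen r b₁ b₂)
    (hXcard : (reachSet r b₁).card ≤ k + 1) : False := by
  have hX₂card : k + 1 ≤ (reachSet r b₂).card := reach_card hk r hout hirr h2
  have hsub : reachSet r b₂ ⊆ (reachSet r b₁).erase b₁ := by
    intro c hc
    have hc' := mem_reachSet.1 hc
    refine Finset.mem_erase.2 ⟨?_, mem_reachSet.2 (hreach.trans hc')⟩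
    rintro rfl
    rcases hreach.cases_tail with heq | ⟨e, hbe, heb⟩
    · exact hne heq.symm
    · exact h2 ⟨e, hc'.trans hbe, heb⟩
  have h1 : b₁ ∈ reachSet r b₁ := mem_reachSet.2 Relation.ReflTransGen.refl
  have h3 := Finset.card_le_card hsub
  rw [Finset.card_erase_of_mem h1] at h3
  have h4 : 1 ≤ (reachSet r b₁).card := Finset.card_pos.2 ⟨b₁, h1⟩
  omega

lemma noncyc_unique {k : ℕ} (hk : 2 ≤ k) (r : α → α → Prop)
    (hcard : Fintype.card α = 2 * k + 1)
    (hout : ∀ b, k - 1 ≤ (outSet r b).card)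
    (hin : ∀ b, k - 1 ≤ (outSet (Function.swap r) b).card)
    (hirr : ∀ b, ¬ r b b)
    {b₁ b₂ : α} (h1 : ¬ ∃ c, Relation.ReflTransGen r b₁ c ∧ r c b₁)
    (h2 : ¬ ∃ c, Relation.ReflTransGen r b₂ c ∧ r c b₂) : b₁ = b₂ := by
  by_contra hne
  set X := reachSet r b₁ with hX
  set Y := reachSet (Function.swap r) b₁ with hY
  have hirr' : ∀ b, ¬ Function.swap r b b := hirr
  have hXcard : k + 1 ≤ X.card := reach_card hk r hout hirr h1
  have hYcard : k + 1 ≤ Y.card :=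
    reach_card hk (Function.swap r) hin hirr' (noncyc_swap' h1)
  have hinter : X ∩ Y = {b₁} := by
    ext c
    simp only [Finset.mem_inter, Finset.mem_singleton, hX, hY, mem_reachSet,
      Relation.reflTransGen_swap]
    constructor
    · rintro ⟨hbc, hcb⟩
      by_contra hcb₁
      rcases hcb.cases_tail with heq | ⟨e, hce, heb⟩
      · exact hcb₁ heq.symm
      · exact h1 ⟨e, hbc.trans hce, heb⟩
    · rintro rfl
      exact ⟨Relation.ReflTransGen.refl, Relation.ReflTransGen.refl⟩
  have hkey := Finset.card_union_add_card_inter X Y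
  rw [hinter, Finset.card_singleton] at hkey
  have hle : (X ∪ Y).card ≤ 2 * k + 1 := by
    calc (X ∪ Y).card ≤ (Finset.univ : Finset α).card := Finset.card_le_univ _
    _ = 2 * k + 1 := by rw [Finset.card_univ, hcard]
  have hXle : X.card ≤ k + 1 := by omega
  have hYle : Y.card ≤ k + 1 := by omega
  have huniv : X ∪ Y = Finset.univ := by
    apply Finset.eq_univ_of_card
    rw [hcard]
    omega
  have hb₂ : b₂ ∈ X ∪ Y := huniv ▸ Finset.mem_univ b₂
  rcases Finset.mem_union.1 hb₂ with hb | hb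
  · exact aux_reach hk r hout hirr h2 hne (mem_reachSet.1 hb) hXle
  · exact aux_reach hk (Function.swap r) hin hirr' (noncyc_swap' h2) hne
      (mem_reachSet.1 hb) hYle

end Aux

theorem stmt5 (k : ℕ) (hk : 2 ≤ k)
    (N : Fin (2 * k + 1) → Finset (Fin (2 * k + 1)))
    (hA : ∀ a, k ≤ (N a).card)
    (hB : ∀ b : Fin (2 * k + 1), k ≤ (Finset.univ.filter (fun a => b ∈ N a)).card)
    (f : Fin (2 * k + 1) ≃ Fin (2 * k + 1)) (hf : ∀ a, f a ∈ N a) :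
    ∃ v' : Fin (2 * k + 1), ∀ v, v ≠ v' →
      ∃ f₁ f₂ : Fin (2 * k + 1) ≃ Fin (2 * k + 1),
        (∀ a, f₁ a ∈ N a) ∧ (∀ a, f₂ a ∈ N a) ∧ f₁ v ≠ f₂ v := by
  classical
  set r : Fin (2*k+1) → Fin (2*k+1) → Prop :=
    fun b b' => b' ∈ N (f.symm b) ∧ b' ≠ b with hr
  have hirr : ∀ b, ¬ r b b := fun b h => h.2 rfl
  have hout : ∀ b, k - 1 ≤ (outSet r b).card := by
    intro b
    have hsub : (N (f.symm b)).erase b ⊆ outSet r b := by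
      intro c hc
      rw [Finset.mem_erase] at hc
      exact mem_outSet.2 ⟨hc.2, hc.1⟩
    have h1 : (N (f.symm b)).card - 1 ≤ ((N (f.symm b)).erase b).card :=
      Finset.pred_card_le_card_erase
    have h2 := hA (f.symm b)
    have h3 := Finset.card_le_card hsub
    omega
  have hin : ∀ b, k - 1 ≤ (outSet (Function.swap r) b).card := by
    intro b
    set S := (Finset.univ.filter (fun a => b ∈ N a)).erase (f.symm b) with hS
    have hsub : S.image f ⊆ outSet (Function.swap r) b := by
      intro c hc
      rw [Finset.mem_image] at hc
      obtain ⟨a, ha, rfl⟩ := hc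
      rw [hS, Finset.mem_erase, Finset.mem_filter] at ha
      refine mem_outSet.2 ?_
      show (b ∈ N (f.symm (f a)) ∧ b ≠ f a)
      refine ⟨by simpa using ha.2.2, ?_⟩
      intro hb
      exact ha.1 (by rw [hb]; simp)
    have h1 : (S.image f).card = S.card := Finset.card_image_of_injective _ f.injective
    have h2 : (Finset.univ.filter (fun a => b ∈ N a)).card - 1 ≤ S.card :=
      Finset.pred_card_le_card_erase
    have h3 := hB b
    have h4 := Finset.card_le_card hsub
    omega
  have hswap : ∀ v, (∃ c, Relation.ReflTransGen r (f v) c ∧ r c (f v)) →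
      ∃ f₂ : Fin (2*k+1) ≃ Fin (2*k+1), (∀ a, f₂ a ∈ N a) ∧ f₂ v ≠ f v := by
    rintro v ⟨c, h1, h2⟩
    obtain ⟨σ, hσ1, hσ2⟩ := exists_perm_of_cycle' h1 h2 hirr
    refine ⟨f.trans σ, ?_, ?_⟩
    · intro a
      rcases hσ2 (f a) with h | h
      · rw [Equiv.trans_apply, h]
        exact hf a
      · have h' := h.1
        rw [Equiv.symm_apply_apply] at h'
        rw [Equiv.trans_apply]
        exact h'
    · rw [Equiv.trans_apply]
      exact hσ1
  have hnc : ∀ w, (¬ ∃ f₁ f₂ : Fin (2*k+1) ≃ Fin (2*k+1),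
      (∀ a, f₁ a ∈ N a) ∧ (∀ a, f₂ a ∈ N a) ∧ f₁ w ≠ f₂ w) →
      ¬ ∃ c, Relation.ReflTransGen r (f w) c ∧ r c (f w) := by
    intro w hw hcyc
    obtain ⟨f₂, hf₂, hne⟩ := hswap w hcyc
    exact hw ⟨f, f₂, hf, hf₂, hne.symm⟩
  by_cases hex : ∃ v' : Fin (2*k+1), ¬ ∃ f₁ f₂ : Fin (2*k+1) ≃ Fin (2*k+1),
      (∀ a, f₁ a ∈ N a) ∧ (∀ a, f₂ a ∈ N a) ∧ f₁ v' ≠ f₂ v'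
  · obtain ⟨v', hv'⟩ := hex
    refine ⟨v', fun v hv => ?_⟩
    by_contra hP
    have hcard : Fintype.card (Fin (2*k+1)) = 2 * k + 1 := by simp
    have := noncyc_unique hk r hcard hout hin hirr (hnc v hP) (hnc v' hv')
    exact hv (f.injective this)
  · push_neg at hex
    refine ⟨⟨0, by omega⟩, fun v _ => ?_⟩
    have := hex v
    simpa using this
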